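/- The projection onto the first coordinate, F̃₂(L_{7,2}) → S³, (x,y) ↦ x, admits a continuous section; its fiber over x ∈ S³ is S³ with the 7-point orbit of x removed. -/

import Mathlib

open Complex

/-- `zeta t = exp(2πit/7)`. -/
noncomputable def zeta (t : ℝ) : ℂ := Complex.exp ((2 * Real.pi * t / 7 : ℝ) * Complex.I)

lemma abs_zeta (t : ℝ) : ‖zeta t‖ = 1 := Complex.norm_exp_ofReal_mul_I _

/-- The 3-sphere as the unit sphere in `ℂ × ℂ`. -/
def Sph3 : Set (ℂ × ℂ) := {p | ‖p.1‖ ^ 2 + ‖p.2‖ ^ 2 = 1}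

/-- The `ℤ/7`-action with parameter `n`: `k • (x₁, x₂) = (ζ^k x₁, ζ^{nk} x₂)`. -/
noncomputable def act (n : ℕ) (k : ZMod 7) (p : ↥Sph3) : ↥Sph3 :=
  ⟨(zeta k.val * p.1.1, zeta (n * k.val) * p.1.2), by
    have h := p.2
    simp only [Sph3, Set.mem_setOf_eq, norm_mul, abs_zeta, one_mul] at h ⊢
    exact h⟩

/-- Orbit equivalence for the `ℤ/7`-action with parameter `n`. -/
def lensRel (n : ℕ) (x y : ↥Sph3) : Prop := ∃ g : ZMod 7, y = act n g x

/-- The lens space `L_{7,n}`, the quotient of `S³` by the `ℤ/7`-action,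
with the quotient topology. -/
abbrev Lens (n : ℕ) := Quot (lensRel n)

/-- The configuration space of `k` (ordered) pairwise distinct points of `M`,
topologized as a subspace of `M^k`. -/
abbrev Conf (k : ℕ) (M : Type*) [TopologicalSpace M] := {f : Fin k → M // Function.Injective f}

/-- The orbit configuration space `F̃₂(L_{7,2})`: pairs `(x,y)` of points of `S³`
with `x ≠ g·y` for all `g ∈ ℤ/7` (action with parameter `2`). -/
abbrev OrbConf2 := {p : ↥Sph3 × ↥Sph3 // ∀ g : ZMod 7, p.1 ≠ act 2 g p.2}

lemma zeta_ne_neg_one (m : ℕ) : zeta m ≠ -1 := by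
  intro h
  have h7 : zeta m ^ 7 = 1 := by
    unfold zeta
    rw [← Complex.exp_nat_mul]
    have : ((7 : ℕ) : ℂ) * (((2 * Real.pi * (m : ℝ) / 7 : ℝ) : ℂ) * Complex.I)
        = (m : ℂ) * (2 * (Real.pi : ℂ) * Complex.I) := by push_cast; ring
    rw [this, Complex.exp_nat_mul_two_pi_mul_I]
  rw [h] at h7
  norm_num at h7

/-- the antipode of a point of the sphere -/
def negSph (x : ↥Sph3) : ↥Sph3 :=
  ⟨(-x.1.1, -x.1.2), by
    have h := x.2
    simp only [Sph3, Set.mem_setOf_eq, norm_neg] at h ⊢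
    exact h⟩

lemma antipode_ne (x : ↥Sph3) (g : ZMod 7) : x ≠ act 2 g (negSph x) := by
  intro h
  have h1 : x.1.1 = zeta g.val * (-x.1.1) := congrArg (fun y => y.1.1) h
  have h2 : x.1.2 = zeta (2 * g.val) * (-x.1.2) := congrArg (fun y => y.1.2) h
  have hx := x.2
  simp only [Sph3, Set.mem_setOf_eq] at hx
  rcases eq_or_ne x.1.1 0 with h0 | h0
  · have hx2 : x.1.2 ≠ 0 := by
      intro h0'
      rw [h0, h0'] at hx
      simp at hx
    have : (zeta (2 * (g.val : ℝ)) + 1) * x.1.2 = 0 := by linear_combination h2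
    rcases mul_eq_zero.mp this with h' | h'
    · exact zeta_ne_neg_one (2 * g.val) (by push_cast; linear_combination h')
    · exact absurd h' hx2
  · have : (zeta (g.val : ℝ) + 1) * x.1.1 = 0 := by linear_combination h1
    rcases mul_eq_zero.mp this with h' | h'
    · exact zeta_ne_neg_one g.val (by linear_combination h')
    · exact absurd h' h0

theorem stmt_9 :
    (∃ s : C(↥Sph3, OrbConf2), ∀ x : ↥Sph3, (s x).1.1 = x) ∧
    ∀ x : ↥Sph3,
      IsHomeomorph (fun p : {p : OrbConf2 // p.1.1 = x} =>
        (⟨p.1.1.2, by intro g; have h := p.1.2 g; rw [p.2] at h; exact h⟩ :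
          {y : ↥Sph3 // ∀ g : ZMod 7, x ≠ act 2 g y})) := by
  constructor
  · refine ⟨⟨fun x => ⟨(x, negSph x), fun g => antipode_ne x g⟩, ?_⟩, fun x => rfl⟩
    apply Continuous.subtype_mk
    refine continuous_id.prodMk ?_
    unfold negSph
    exact Continuous.subtype_mk
      ((continuous_fst.comp continuous_subtype_val).neg.prodMk
        (continuous_snd.comp continuous_subtype_val).neg) _
  · intro x
    have hcont : Continuous (fun p : {p : OrbConf2 // p.1.1 = x} =>
        (⟨p.1.1.2, by intro g; have h := p.1.2 g; rw [p.2] at h; exact h⟩ :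
          {y : ↥Sph3 // ∀ g : ZMod 7, x ≠ act 2 g y})) :=
      (continuous_snd.comp (continuous_subtype_val.comp continuous_subtype_val)).subtype_mk _
    refine (Homeomorph.mk
      ⟨_, fun y => (⟨⟨(x, y.1), fun g h => y.2 g h⟩, rfl⟩ :
          {p : OrbConf2 // p.1.1 = x}), ?_, ?_⟩ hcont ?_).isHomeomorph
    · intro p
      apply Subtype.ext
      apply Subtype.ext
      exact Prod.ext p.2.symm rfl
    · intro y; rfl
    · exact ((continuous_const.prodMk continuous_subtype_val).subtype_mk _).subtype_mk _
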